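/- arXiv:1812.07542 — 2 statements merged into one kernel-verified Lean document; each statement's English description precedes it below -/
import Mathlib

section
/- The pair (α_n, β_n) with α_0 = 1, α_{3r} = q^{(9r^2-3r)/2}(1+q^{3r}) for r>0, α_{3r-1} = -q^{(9r^2-9r)/2+1}, α_{3r+1} = -q^{(9r^2+9r)/2+1}, and β_n = (-1;q^3)_n / ((q;q)_{2n} (-1;q)_n) (with β_0 = 1) forms a Bailey pair relative to a=1; i.e., for all n ≥ 0, β_n = Σ_{r=0}^n α_r / ((q;q)_{n+r} (q;q)_{n-r}). -/
open Complex

noncomputable def qPoch (a q : ℂ) (n : ℕ) : ℂ := ∏ j ∈ Finset.range n, (1 - a * q ^ j)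

noncomputable def qPochInf (a q : ℂ) : ℂ := ∏' j : ℕ, (1 - a * q ^ j)

noncomputable def alphaBP (q : ℂ) (n : ℕ) : ℂ :=
  if n = 0 then 1
  else if n % 3 = 0 then q ^ ((9 * (n / 3) ^ 2 - 3 * (n / 3)) / 2) * (1 + q ^ n)
  else if n % 3 = 2 then -q ^ ((9 * ((n + 1) / 3) ^ 2 - 9 * ((n + 1) / 3)) / 2 + 1)
  else -q ^ ((9 * (n / 3) ^ 2 + 9 * (n / 3)) / 2 + 1)

namespace BP15
open Finset

def tri : ℕ → ℕ
  | 0 => 0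
  | n+1 => tri n + n

lemma tri_add (a b : ℕ) : tri (a+b) = tri a + tri b + a*b := by
  induction b with
  | zero => simp [tri]
  | succ b ih =>
      have : a + (b+1) = (a+b) + 1 := by omega
      rw [this, tri, ih, tri]
      ring

lemma two_tri (j : ℕ) : 2 * tri j = j * (j-1) := by
  induction j with
  | zero => simp [tri]
  | succ j ih =>
      rw [tri]
      rcases j with _ | m
      · simp [tri]
      · have h : (m+1) * (m+1-1) + 2*(m+1) = (m+1+1) * (m+1+1-1) := by
          simp only [Nat.add_sub_cancel]
          ring
        rw [Nat.mul_add, ih] at *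
        omega

lemma tri_sq (n : ℕ) : tri n + tri (n+1) = n * n := by
  have h1 := two_tri n
  have h2 : n * (n-1) + n = n * n := by
    rcases n with _ | m
    · simp
    · simp only [Nat.add_sub_cancel]; ring
  show tri n + (tri n + n) = n * n
  omega


lemma tri_sum (n : ℕ) : ∑ i ∈ range n, i = tri n := by
  induction n with
  | zero => simp [tri]
  | succ n ih => rw [Finset.sum_range_succ, ih]; rfl

noncomputable def gB (q : ℂ) : ℕ → ℕ → ℂ
  | _, 0 => 1
  | 0, _+1 => 0
  | m+1, k+1 => gB q m (k+1) + q^(m-k) * gB q m k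

lemma gB_zero_right (q : ℂ) (m : ℕ) : gB q m 0 = 1 := by cases m <;> rfl

lemma gB_eq_zero (q : ℂ) : ∀ {m k : ℕ}, m < k → gB q m k = 0 := by
  intro m
  induction m with
  | zero => intro k h; rcases k with _ | k; · omega
            rfl
  | succ m ih =>
      intro k h
      rcases k with _ | k
      · omega
      · show gB q m (k+1) + q^(m-k) * gB q m k = 0
        rw [ih (by omega), ih (by omega)]
        ring

lemma gB_self (q : ℂ) (m : ℕ) : gB q m m = 1 := by
  induction m with
  | zero => rfl
  | succ m ih =>
      show gB q m (m+1) + q^(m-m) * gB q m m = 1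
      rw [gB_eq_zero q (by omega), ih]
      simp

lemma qPoch_succ (a q : ℂ) (n : ℕ) :
    qPoch a q (n+1) = qPoch a q n * (1 - a * q ^ n) := Finset.prod_range_succ _ _

lemma pochB (q : ℂ) : ∀ (m a b : ℕ), a + b = m →
    qPoch q q m = gB q m a * qPoch q q a * qPoch q q b := by
  intro m
  induction m with
  | zero =>
      intro a b h
      obtain ⟨rfl, rfl⟩ : a = 0 ∧ b = 0 := by omega
      simp [qPoch, gB_zero_right]
  | succ m ih =>
      intro a b h
      rcases a with _ | k
      · simp only [Nat.zero_add] at h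
        subst h
        simp [qPoch, gB_zero_right]
      · rcases b with _ | b'
        · obtain rfl : k = m := by omega
          rw [gB_self]
          simp [qPoch]
        · have hm : k + 1 + b' = m := by omega
          have hm2 : k + (b'+1) = m := by omega
          have ih1 := ih (k+1) b' hm
          have ih2 := ih k (b'+1) hm2
          show qPoch q q (m+1) = (gB q m (k+1) + q^(m-k) * gB q m k) * _ * _
          rw [qPoch_succ q q m, qPoch_succ q q k, qPoch_succ q q b']
          rw [qPoch_succ q q k] at ih1
          rw [qPoch_succ q q b'] at ih2
          have hmk : m - k = b' + 1 := by omega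
          rw [hmk]
          have hqm : q * q ^ m = q^(b'+1) * (q * q^k) := by
            rw [← hm]
            ring
          rw [hqm]
          linear_combination (1 - q * q^b') * ih1 + (q^(b'+1) * (1 - q * q^k)) * ih2

lemma gauss (q x : ℂ) : ∀ m : ℕ, ∏ i ∈ range m, (1 + x * q^i) =
    ∑ k ∈ range (m+1), q^(tri k) * x^k * gB q m k := by
  intro m
  induction m with
  | zero => simp [tri, gB_self]
  | succ m ih =>
      rw [prod_range_succ, ih]
      have hL : (∑ k ∈ range (m+1), q^(tri k) * x^k * gB q m k) * (1 + x * q^m)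
          = (∑ k ∈ range (m+1), q^(tri k) * x^k * gB q m k)
            + ∑ k ∈ range (m+1), q^(tri k) * x^k * gB q m k * (x * q^m) := by
        rw [mul_add, mul_one, ← Finset.sum_mul]
      rw [hL]
      have hext : (∑ k ∈ range (m+1), q^(tri k) * x^k * gB q m k)
          = ∑ k ∈ range (m+2), q^(tri k) * x^k * gB q m k := by
        rw [Finset.sum_range_succ (n := m+1), gB_eq_zero q (by omega)]
        ring
      rw [hext]
      rw [Finset.sum_range_succ' (fun k => q^(tri k) * x^k * gB q m k) (m+1)]
      rw [Finset.sum_range_succ' (fun k => q^(tri k) * x^k * gB q (m+1) k) (m+1)]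
      simp only [pow_zero, gB_zero_right, mul_one, one_mul]
      rw [show (tri 0) = 0 from rfl, pow_zero]
      rw [add_right_comm, ← Finset.sum_add_distrib]
      congr 1
      apply Finset.sum_congr rfl
      intro k hk
      have hkm : k ≤ m := by simpa using Nat.lt_succ_iff.mp (Finset.mem_range.mp hk)
      show q^(tri (k+1)) * x^(k+1) * gB q m (k+1) + q^(tri k) * x^k * gB q m k * (x*q^m)
          = q^(tri (k+1)) * x^(k+1) * (gB q m (k+1) + q^(m-k) * gB q m k)
      have ht : tri (k+1) + (m-k) = tri k + m := by
        show tri k + k + (m-k) = tri k + m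
        omega
      have hpow : q^(tri (k+1)) * q^(m-k) = q^(tri k) * q^m := by
        rw [← pow_add, ← pow_add, ht]
      calc q^(tri (k+1)) * x^(k+1) * gB q m (k+1) + q^(tri k) * x^k * gB q m k * (x*q^m)
          = q^(tri (k+1)) * x^(k+1) * gB q m (k+1)
            + (q^(tri k) * q^m) * x^(k+1) * gB q m k := by ring
        _ = _ := by rw [← hpow]; ring

-- the weight function from evaluating Gauss at sixth roots of unity
noncomputable def Wc (q z : ℂ) (n k : ℕ) : ℂ :=
  (-1)^(n+k) * q^(tri k + tri (n+1)) * (q⁻¹)^(n*k) *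
    ((1+z)/3 * z^k * (1-z)^n + (2-z)/3 * (1-z)^k * z^n)

lemma exists_z : ∃ z : ℂ, z^2 = z - 1 := by
  refine ⟨(1 + Real.sqrt 3 * Complex.I)/2, ?_⟩
  have hs : ((Real.sqrt 3 : ℝ) : ℂ)^2 = 3 := by
    rw [← Complex.ofReal_pow]
    norm_num [Real.sq_sqrt]
  have hI := Complex.I_sq
  linear_combination (Complex.I^2/4) * hs + (3/4 : ℂ) * hI

section main
variable (q z : ℂ) (n : ℕ)

lemma qPoch_q_ne_zero (hq : ‖q‖ < 1) (m : ℕ) : qPoch q q m ≠ 0 := by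
  unfold qPoch
  rw [Finset.prod_ne_zero_iff]
  intro j _
  intro h
  have h1 : q * q ^ j = 1 := by linear_combination -h
  have : ‖q * q ^ j‖ = 1 := by rw [h1]; simp
  rw [norm_mul, norm_pow] at this
  have h2 : ‖q‖ * ‖q‖ ^ j < 1 := by
    calc ‖q‖ * ‖q‖ ^ j ≤ ‖q‖ * 1 := by
          apply mul_le_mul_of_nonneg_left _ (norm_nonneg _)
          exact pow_le_one₀ (norm_nonneg _) hq.le
      _ < 1 := by simpa using hq
  rw [this] at h2
  exact lt_irrefl _ h2

lemma qPoch_neg_ne_zero (hq : ‖q‖ < 1) (m : ℕ) : qPoch (-1) q m ≠ 0 := by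
  unfold qPoch
  rw [Finset.prod_ne_zero_iff]
  intro j _
  rcases Nat.eq_zero_or_pos j with rfl | hj
  · norm_num
  · intro h
    have h1 : q ^ j = -1 := by linear_combination h
    have : ‖q ^ j‖ = 1 := by rw [h1]; simp
    rw [norm_pow] at this
    have h2 : ‖q‖ ^ j < 1 :=
      pow_lt_one₀ (norm_nonneg _) hq (by omega)
    rw [this] at h2
    exact lt_irrefl _ h2

lemma gB_symm (hq : ‖q‖ < 1) (r : ℕ) (h : r ≤ n) :
    gB q (2*n) (n+r) = gB q (2*n) (n-r) := by
  have h1 := pochB q (2*n) (n+r) (n-r) (by omega)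
  have h2 := pochB q (2*n) (n-r) (n+r) (by omega)
  have hne : qPoch q q (n+r) * qPoch q q (n-r) ≠ 0 :=
    mul_ne_zero (qPoch_q_ne_zero q hq _) (qPoch_q_ne_zero q hq _)
  apply mul_right_cancel₀ hne
  rw [show gB q (2*n) (n+r) * (qPoch q q (n+r) * qPoch q q (n-r))
      = gB q (2*n) (n+r) * qPoch q q (n+r) * qPoch q q (n-r) by ring, ← h1]
  rw [show gB q (2*n) (n-r) * (qPoch q q (n+r) * qPoch q q (n-r))
      = gB q (2*n) (n-r) * qPoch q q (n-r) * qPoch q q (n+r) by ring, ← h2]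

lemma Wc_self (hz : z^2 = z - 1) (hq0 : q ≠ 0) : Wc q z n n = 1 := by
  unfold Wc
  have hze : z * (1-z) = 1 := by linear_combination -hz
  have h1 : ((-1 : ℂ))^(n+n) = 1 := by
    rw [← two_mul, pow_mul]
    norm_num
  have h2 : (q : ℂ)^(tri n + tri (n+1)) * (q⁻¹)^(n*n) = 1 := by
    rw [tri_sq, inv_pow, mul_inv_cancel₀ (pow_ne_zero _ hq0)]
  have h3 : z^n * (1-z)^n = 1 := by rw [← mul_pow, hze, one_pow]
  calc (-1 : ℂ)^(n+n) * q^(tri n + tri (n+1)) * (q⁻¹)^(n*n) *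
      ((1+z)/3 * z^n * (1-z)^n + (2-z)/3 * (1-z)^n * z^n)
      = ((-1 : ℂ)^(n+n)) * (q^(tri n + tri (n+1)) * (q⁻¹)^(n*n)) *
        ((1+z)/3 * (z^n * (1-z)^n) + (2-z)/3 * (z^n * (1-z)^n)) := by ring
    _ = 1 := by rw [h1, h2, h3]; ring

lemma Wc_plus (hz : z^2 = z - 1) (hq0 : q ≠ 0) (r : ℕ) :
    Wc q z n (n+r) = (-1)^r * (q^(tri r) * ((1+z)/3 * z^r + (2-z)/3 * (1-z)^r)) := by
  unfold Wc
  have hze : z * (1-z) = 1 := by linear_combination -hz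
  have hsgn : ((-1 : ℂ))^(n+(n+r)) = (-1)^r := by
    rw [show n+(n+r) = 2*n + r by omega, pow_add, pow_mul]
    norm_num
  have ht : tri (n+r) + tri (n+1) = tri r + n*(n+r) := by
    rw [tri_add n r]
    have hs := tri_sq n
    have h1 : n*(n+r) = n*n + n*r := by ring
    omega
  have hqp : q^(tri (n+r) + tri (n+1)) * (q⁻¹)^(n*(n+r)) = q^(tri r) := by
    rw [ht, pow_add, inv_pow, mul_assoc, mul_inv_cancel₀ (pow_ne_zero _ hq0), mul_one]
  have hz1 : z^(n+r) * (1-z)^n = z^r := by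
    rw [pow_add, show z^n * z^r * (1-z)^n = (z*(1-z))^n * z^r by rw [mul_pow]; ring,
      hze, one_pow, one_mul]
  have hz2 : (1-z)^(n+r) * z^n = (1-z)^r := by
    rw [pow_add, show (1-z)^n * (1-z)^r * z^n = (z*(1-z))^n * (1-z)^r by rw [mul_pow]; ring,
      hze, one_pow, one_mul]
  calc (-1:ℂ)^(n+(n+r)) * q^(tri (n+r) + tri (n+1)) * (q⁻¹)^(n*(n+r)) *
      ((1+z)/3 * z^(n+r) * (1-z)^n + (2-z)/3 * (1-z)^(n+r) * z^n)
      = ((-1:ℂ)^(n+(n+r))) * (q^(tri (n+r) + tri (n+1)) * (q⁻¹)^(n*(n+r))) *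
        ((1+z)/3 * (z^(n+r) * (1-z)^n) + (2-z)/3 * ((1-z)^(n+r) * z^n)) := by ring
    _ = _ := by rw [hsgn, hqp, hz1, hz2]; ring

lemma Wc_minus (hz : z^2 = z - 1) (hq0 : q ≠ 0) (r : ℕ) (h2 : r ≤ n) :
    Wc q z n (n-r) = (-1)^r * (q^(tri (r+1)) * ((1+z)/3 * (1-z)^r + (2-z)/3 * z^r)) := by
  obtain ⟨m, rfl⟩ : ∃ m, n = m + r := ⟨n - r, by omega⟩
  rw [show m + r - r = m by omega]
  unfold Wc
  have hze : z * (1-z) = 1 := by linear_combination -hz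
  have hsgn : ((-1 : ℂ))^((m+r)+m) = (-1)^r := by
    rw [show (m+r)+m = 2*m + r by omega, pow_add, pow_mul]
    norm_num
  have ht : tri m + tri (m+r+1) = tri (r+1) + (m+r)*m := by
    rw [show m+r+1 = m + (r+1) by omega, tri_add m (r+1)]
    have hs := tri_sq m
    have htm : tri (m+1) = tri m + m := rfl
    have h1 : (m+r)*m = m*m + r*m := by ring
    have h2 : m*(r+1) = m*r + m := by ring
    have h3 : m*r = r*m := by ring
    omega
  have hqp : q^(tri m + tri (m+r+1)) * (q⁻¹)^((m+r)*m) = q^(tri (r+1)) := by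
    rw [ht, pow_add, inv_pow, mul_assoc, mul_inv_cancel₀ (pow_ne_zero _ hq0), mul_one]
  have hz1 : z^m * (1-z)^(m+r) = (1-z)^r := by
    rw [pow_add, show z^m * ((1-z)^m * (1-z)^r) = (z*(1-z))^m * (1-z)^r by rw [mul_pow]; ring,
      hze, one_pow, one_mul]
  have hz2 : (1-z)^m * z^(m+r) = z^r := by
    rw [pow_add, show (1-z)^m * (z^m * z^r) = (z*(1-z))^m * z^r by rw [mul_pow]; ring,
      hze, one_pow, one_mul]
  calc (-1:ℂ)^((m+r)+m) * q^(tri m + tri (m+r+1)) * (q⁻¹)^((m+r)*m) *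
      ((1+z)/3 * z^m * (1-z)^(m+r) + (2-z)/3 * (1-z)^m * z^(m+r))
      = ((-1:ℂ)^((m+r)+m)) * (q^(tri m + tri (m+r+1)) * (q⁻¹)^((m+r)*m)) *
        ((1+z)/3 * (z^m * (1-z)^(m+r)) + (2-z)/3 * ((1-z)^m * z^(m+r))) := by ring
    _ = _ := by rw [hsgn, hqp, hz1, hz2]; ring

lemma Wc_coef (hz : z^2 = z - 1) (hq0 : q ≠ 0) (r : ℕ)
    (h1 : 1 ≤ r) (h2 : r ≤ n) :
    Wc q z n (n+r) + Wc q z n (n-r) = alphaBP q r := by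
  rw [Wc_plus q z n hz hq0 r, Wc_minus q z n hz hq0 r h2]
  have hz3 : z^3 = -1 := by linear_combination (z+1)*hz
  have hz6 : z^6 = 1 := by rw [show (6:ℕ) = 3*2 from rfl, pow_mul, hz3]; norm_num
  have he2 : (1-z)^2 = -z := by linear_combination hz
  have he3 : (1-z)^3 = -1 := by linear_combination (2-z)*hz
  have he6 : (1-z)^6 = 1 := by rw [show (6:ℕ) = 3*2 from rfl, pow_mul, he3]; norm_num
  have hz4 : z^4 = -z := by rw [show (4:ℕ) = 3+1 from rfl, pow_add, hz3]; ring
  have hz5 : z^5 = 1-z := by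
    rw [show (5:ℕ) = 3+2 from rfl, pow_add, hz3, hz]; ring
  have he4 : (1-z)^4 = z-1 := by rw [show (4:ℕ) = 3+1 from rfl, pow_add, he3]; ring
  have he5 : (1-z)^5 = z := by rw [show (5:ℕ) = 3+2 from rfl, pow_add, he3, he2]; ring
  obtain ⟨m, c, hc6, rfl⟩ : ∃ m c, c < 6 ∧ r = 6*m + c :=
    ⟨r/6, r%6, Nat.mod_lt _ (by norm_num), by omega⟩
  have hzr : z^(6*m+c) = z^c := by rw [pow_add, pow_mul, hz6, one_pow, one_mul]
  have her : (1-z)^(6*m+c) = (1-z)^c := by rw [pow_add, pow_mul, he6, one_pow, one_mul]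
  have hsr : (-1:ℂ)^(6*m+c) = (-1)^c := by rw [pow_add, pow_mul]; norm_num
  rw [hzr, her, hsr]
  have htsucc : ∀ j : ℕ, tri (j+1) = tri j + j := fun j => rfl
  interval_cases c
  · -- c = 0, r = 6m, m ≥ 1
    have hα : alphaBP q (6*m+0) = q^(tri (6*m)) * (1 + q^(6*m)) := by
      unfold alphaBP
      rw [if_neg (by omega), if_pos (by omega)]
      have hd : (6*m+0)/3 = 2*m := by omega
      rw [hd]
      have hE : (9*(2*m)^2 - 3*(2*m))/2 = tri (6*m) := by
        have h2t := two_tri (6*m)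
        have e1 : 6*m*(6*m-1) + 6*m = 36*(m*m) := by
          cases m with
          | zero => simp
          | succ k =>
              rw [show 6*(k+1)-1 = 6*k+5 by omega]
              ring
        have e2 : 9*(2*m)^2 = 36*(m*m) := by ring
        have e3 : 3*(2*m) = 6*m := by ring
        omega
      rw [hE, show 6*m+0 = 6*m from rfl]
    rw [hα, htsucc (6*m+0)]
    rw [show tri (6*m+0) = tri (6*m) from rfl, pow_add]
    ring
  · -- c = 1
    have hα : alphaBP q (6*m+1) = -q^(tri (6*m+2)) := by
      unfold alphaBP
      rw [if_neg (by omega), if_neg (by omega), if_neg (by omega)]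
      have hd : (6*m+1)/3 = 2*m := by omega
      rw [hd]
      have hE : (9*(2*m)^2 + 9*(2*m))/2 + 1 = tri (6*m+2) := by
        have h2t := two_tri (6*m+2)
        rw [show (6*m+2) - 1 = 6*m+1 by omega] at h2t
        have e1 : (6*m+2)*(6*m+1) = 36*(m*m)+18*m+2 := by ring
        rw [e1] at h2t
        have e2 : 9*(2*m)^2 + 9*(2*m) = 36*(m*m)+18*m := by ring
        omega
      rw [hE]
    rw [hα, show (6*m+1+1) = 6*m+2 from rfl]
    have hU : (1+z)/3 * z^1 + (2-z)/3 * (1-z)^1 = 0 := by linear_combination (2/3)*hz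
    have hV : (1+z)/3 * (1-z)^1 + (2-z)/3 * z^1 = 1 := by linear_combination (-2/3)*hz
    rw [hU, hV]
    ring
  · -- c = 2
    have hα : alphaBP q (6*m+2) = -q^(tri (6*m+2)) := by
      unfold alphaBP
      rw [if_neg (by omega), if_neg (by omega), if_pos (by omega)]
      have hd : (6*m+2+1)/3 = 2*m+1 := by omega
      rw [hd]
      have hE : (9*(2*m+1)^2 - 9*(2*m+1))/2 + 1 = tri (6*m+2) := by
        have h2t := two_tri (6*m+2)
        rw [show (6*m+2) - 1 = 6*m+1 by omega] at h2t
        have e1 : (6*m+2)*(6*m+1) = 36*(m*m)+18*m+2 := by ring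
        rw [e1] at h2t
        have e2 : 9*(2*m+1)^2 = 36*(m*m)+36*m+9 := by ring
        have e3 : 9*(2*m+1) = 18*m+9 := by ring
        omega
      rw [hE]
    rw [hα]
    have hU : (1+z)/3 * z^2 + (2-z)/3 * (1-z)^2 = -1 := by
      rw [hz, he2]; linear_combination (2/3)*hz
    have hV : (1+z)/3 * (1-z)^2 + (2-z)/3 * z^2 = 0 := by
      rw [hz, he2]; linear_combination (-2/3)*hz
    rw [hU, hV]
    ring
  · -- c = 3
    have hα : alphaBP q (6*m+3) = q^(tri (6*m+3)) * (1 + q^(6*m+3)) := by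
      unfold alphaBP
      rw [if_neg (by omega), if_pos (by omega)]
      have hd : (6*m+3)/3 = 2*m+1 := by omega
      rw [hd]
      have hE : (9*(2*m+1)^2 - 3*(2*m+1))/2 = tri (6*m+3) := by
        have h2t := two_tri (6*m+3)
        rw [show (6*m+3) - 1 = 6*m+2 by omega] at h2t
        have e1 : (6*m+3)*(6*m+2) = 36*(m*m)+30*m+6 := by ring
        rw [e1] at h2t
        have e2 : 9*(2*m+1)^2 = 36*(m*m)+36*m+9 := by ring
        have e3 : 3*(2*m+1) = 6*m+3 := by ring
        omega
      rw [hE]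
    rw [hα, htsucc (6*m+3), pow_add]
    have hU : (1+z)/3 * z^3 + (2-z)/3 * (1-z)^3 = -1 := by
      rw [hz3, he3]; ring
    have hV : (1+z)/3 * (1-z)^3 + (2-z)/3 * z^3 = -1 := by
      rw [hz3, he3]; ring
    rw [hU, hV]
    ring
  · -- c = 4
    have hα : alphaBP q (6*m+4) = -q^(tri (6*m+5)) := by
      unfold alphaBP
      rw [if_neg (by omega), if_neg (by omega), if_neg (by omega)]
      have hd : (6*m+4)/3 = 2*m+1 := by omega
      rw [hd]
      have hE : (9*(2*m+1)^2 + 9*(2*m+1))/2 + 1 = tri (6*m+5) := by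
        have h2t := two_tri (6*m+5)
        rw [show (6*m+5) - 1 = 6*m+4 by omega] at h2t
        have e1 : (6*m+5)*(6*m+4) = 36*(m*m)+54*m+20 := by ring
        rw [e1] at h2t
        have e2 : 9*(2*m+1)^2 = 36*(m*m)+36*m+9 := by ring
        have e3 : 9*(2*m+1) = 18*m+9 := by ring
        omega
      rw [hE]
    rw [hα, show (6*m+4+1) = 6*m+5 from rfl]
    have hU : (1+z)/3 * z^4 + (2-z)/3 * (1-z)^4 = 0 := by
      rw [hz4, he4]; linear_combination (-2/3)*hz
    have hV : (1+z)/3 * (1-z)^4 + (2-z)/3 * z^4 = -1 := by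
      rw [hz4, he4]; linear_combination (2/3)*hz
    rw [hU, hV]
    ring
  · -- c = 5
    have hα : alphaBP q (6*m+5) = -q^(tri (6*m+5)) := by
      unfold alphaBP
      rw [if_neg (by omega), if_neg (by omega), if_pos (by omega)]
      have hd : (6*m+5+1)/3 = 2*m+2 := by omega
      rw [hd]
      have hE : (9*(2*m+2)^2 - 9*(2*m+2))/2 + 1 = tri (6*m+5) := by
        have h2t := two_tri (6*m+5)
        rw [show (6*m+5) - 1 = 6*m+4 by omega] at h2t
        have e1 : (6*m+5)*(6*m+4) = 36*(m*m)+54*m+20 := by ring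
        rw [e1] at h2t
        have e2 : 9*(2*m+2)^2 = 36*(m*m)+72*m+36 := by ring
        have e3 : 9*(2*m+2) = 18*m+18 := by ring
        omega
      rw [hE]
    rw [hα]
    have hU : (1+z)/3 * z^5 + (2-z)/3 * (1-z)^5 = 1 := by
      rw [hz5, he5]; linear_combination (-2/3)*hz
    have hV : (1+z)/3 * (1-z)^5 + (2-z)/3 * z^5 = 0 := by
      rw [hz5, he5]; linear_combination (2/3)*hz
    rw [hU, hV]
    ring


lemma sum_alpha_eq_sum_W (hz : z^2 = z - 1) (hq : ‖q‖ < 1) (hq0 : q ≠ 0) :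
    ∑ r ∈ range (n+1), alphaBP q r * gB q (2*n) (n-r)
      = ∑ k ∈ range (2*n+1), Wc q z n k * gB q (2*n) k := by
  rw [show 2*n+1 = n + (n+1) by omega]
  rw [Finset.sum_range_add (fun k => Wc q z n k * gB q (2*n) k) n (n+1)]
  rw [Finset.sum_range_succ' (fun k => Wc q z n (n+k) * gB q (2*n) (n+k)) n]
  rw [← Finset.sum_range_reflect (fun k => Wc q z n k * gB q (2*n) k) n]
  rw [Finset.sum_range_succ' (fun r => alphaBP q r * gB q (2*n) (n-r)) n]
  have h0 : alphaBP q 0 * gB q (2*n) (n-0) = Wc q z n (n+0) * gB q (2*n) (n+0) := by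
    rw [show n+0 = n from rfl, Wc_self q z n hz hq0]
    unfold alphaBP
    rw [if_pos rfl]
    norm_num
  rw [h0]
  have h : ∀ j ∈ range n, alphaBP q (j+1) * gB q (2*n) (n-(j+1))
      = Wc q z n (n-1-j) * gB q (2*n) (n-1-j) + Wc q z n (n+(j+1)) * gB q (2*n) (n+(j+1)) := by
    intro j hj
    have hjn : j < n := Finset.mem_range.mp hj
    have e1 : n-1-j = n-(j+1) := by omega
    rw [e1, gB_symm q n hq (j+1) (by omega)]
    have := Wc_coef q z n hz hq0 (j+1) (by omega) (by omega)
    calc alphaBP q (j+1) * gB q (2*n) (n-(j+1))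
        = (Wc q z n (n+(j+1)) + Wc q z n (n-(j+1))) * gB q (2*n) (n-(j+1)) := by rw [this]
      _ = _ := by ring
  rw [Finset.sum_congr rfl h, Finset.sum_add_distrib]
  ring


lemma sum_W_eq_prod (hz : z^2 = z - 1) (hq0 : q ≠ 0) :
    ∑ k ∈ range (2*n+1), Wc q z n k * gB q (2*n) k
      = ∏ i ∈ range n, (1 - q^i + q^(2*i)) := by
  have hze : z * (1-z) = 1 := by linear_combination -hz
  set x1 : ℂ := -z * (q⁻¹)^n with hx1
  set x2 : ℂ := -(1-z) * (q⁻¹)^n with hx2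
  set Ca : ℂ := (1+z)/3 * (1-z)^n * (-1)^n * q^(tri (n+1)) with hCa
  set Cb : ℂ := (2-z)/3 * z^n * (-1)^n * q^(tri (n+1)) with hCb
  -- Step A: rewrite the sum as a combination of two Gauss sums
  have stepA : ∑ k ∈ range (2*n+1), Wc q z n k * gB q (2*n) k
      = Ca * (∑ k ∈ range (2*n+1), q^(tri k) * x1^k * gB q (2*n) k)
        + Cb * (∑ k ∈ range (2*n+1), q^(tri k) * x2^k * gB q (2*n) k) := by
    rw [Finset.mul_sum, Finset.mul_sum, ← Finset.sum_add_distrib]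
    apply Finset.sum_congr rfl
    intro k _
    have ex1 : x1^k = (-1)^k * z^k * (q⁻¹)^(n*k) := by
      rw [hx1, mul_pow, neg_pow, pow_mul]
    have ex2 : x2^k = (-1)^k * (1-z)^k * (q⁻¹)^(n*k) := by
      rw [hx2, mul_pow, neg_pow, pow_mul]
    rw [ex1, ex2, hCa, hCb]
    unfold Wc
    rw [pow_add (-1 : ℂ) n k, pow_add q (tri k) (tri (n+1))]
    ring
  rw [stepA, ← gauss q x1 (2*n), ← gauss q x2 (2*n)]
  -- Step B/C: product manipulation
  have hsplit : ∀ x : ℂ, ∏ i ∈ range (2*n), (1 + x * q^i)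
      = (∏ i ∈ range n, (1 + x * q^i)) * ∏ i ∈ range n, (1 + x * q^(n+i)) := by
    intro x
    rw [show 2*n = n + n by omega, Finset.prod_range_add]
  have htail1 : ∏ i ∈ range n, (1 + x1 * q^(n+i)) = ∏ i ∈ range n, (1 - z * q^i) := by
    apply Finset.prod_congr rfl
    intro i _
    rw [hx1, pow_add]
    have : (q⁻¹)^n * (q^n * q^i) = q^i := by
      rw [inv_pow, ← mul_assoc, inv_mul_cancel₀ (pow_ne_zero _ hq0), one_mul]
    calc 1 + -z * (q⁻¹)^n * (q^n * q^i) = 1 + -z * ((q⁻¹)^n * (q^n * q^i)) := by ring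
      _ = 1 - z * q^i := by rw [this]; ring
  have htail2 : ∏ i ∈ range n, (1 + x2 * q^(n+i)) = ∏ i ∈ range n, (1 - (1-z) * q^i) := by
    apply Finset.prod_congr rfl
    intro i _
    rw [hx2, pow_add]
    have : (q⁻¹)^n * (q^n * q^i) = q^i := by
      rw [inv_pow, ← mul_assoc, inv_mul_cancel₀ (pow_ne_zero _ hq0), one_mul]
    calc 1 + -(1-z) * (q⁻¹)^n * (q^n * q^i) = 1 + -(1-z) * ((q⁻¹)^n * (q^n * q^i)) := by ring
      _ = 1 - (1-z) * q^i := by rw [this]; ring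
  -- head products
  have hpowprod : ∏ i ∈ range n, q^(n-i) = q^(tri (n+1)) := by
    rw [Finset.prod_pow_eq_pow_sum]
    congr 1
    have h1 : ∑ i ∈ range n, (n - i) = ∑ i ∈ range n, (i+1) := by
      rw [← Finset.sum_range_reflect (fun i => i + 1) n]
      apply Finset.sum_congr rfl
      intro i hi
      have := Finset.mem_range.mp hi
      omega
    rw [h1, Finset.sum_add_distrib, tri_sum]
    simp [tri]
  have hhead1 : (-1:ℂ)^n * q^(tri (n+1)) * ∏ i ∈ range n, (1 + x1 * q^i)
      = z^n * ∏ i ∈ range n, (1 - (1-z) * q^(i+1)) := by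
    have key : ∏ i ∈ range n, ((-1) * q^(n-i) * (1 + x1 * q^i))
        = ∏ i ∈ range n, (z * (1 - (1-z) * q^(n-i))) := by
      apply Finset.prod_congr rfl
      intro i hi
      have hin : i < n := Finset.mem_range.mp hi
      have hq1 : q^(n-i) * q^i = q^n := by rw [← pow_add]; congr 1; omega
      have hq2 : q^n * (q⁻¹)^n = 1 := by
        rw [inv_pow, mul_inv_cancel₀ (pow_ne_zero _ hq0)]
      calc (-1) * q^(n-i) * (1 + x1 * q^i)
          = -q^(n-i) + z * (q^(n-i) * q^i) * (q⁻¹)^n := by rw [hx1]; ring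
        _ = -q^(n-i) + z * (q^n * (q⁻¹)^n) := by rw [hq1]; ring
        _ = z - q^(n-i) := by rw [hq2]; ring
        _ = z * (1 - (1-z) * q^(n-i)) := by
            have : z * ((1-z) * q^(n-i)) = q^(n-i) := by
              rw [← mul_assoc, hze, one_mul]
            rw [mul_sub, mul_one, this]
    simp only [Finset.prod_mul_distrib, Finset.prod_const, Finset.card_range] at key
    rw [hpowprod] at key
    rw [key]
    congr 1
    rw [← Finset.prod_range_reflect (fun i => 1 - (1-z) * q^(i+1)) n]
    apply Finset.prod_congr rfl
    intro i hi
    have hin2 : i < n := Finset.mem_range.mp hi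
    rw [show n - 1 - i + 1 = n - i by omega]
  have hhead2 : (-1:ℂ)^n * q^(tri (n+1)) * ∏ i ∈ range n, (1 + x2 * q^i)
      = (1-z)^n * ∏ i ∈ range n, (1 - z * q^(i+1)) := by
    have key : ∏ i ∈ range n, ((-1) * q^(n-i) * (1 + x2 * q^i))
        = ∏ i ∈ range n, ((1-z) * (1 - z * q^(n-i))) := by
      apply Finset.prod_congr rfl
      intro i hi
      have hin : i < n := Finset.mem_range.mp hi
      have hq1 : q^(n-i) * q^i = q^n := by rw [← pow_add]; congr 1; omega
      have hq2 : q^n * (q⁻¹)^n = 1 := by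
        rw [inv_pow, mul_inv_cancel₀ (pow_ne_zero _ hq0)]
      calc (-1) * q^(n-i) * (1 + x2 * q^i)
          = -q^(n-i) + (1-z) * (q^(n-i) * q^i) * (q⁻¹)^n := by rw [hx2]; ring
        _ = -q^(n-i) + (1-z) * (q^n * (q⁻¹)^n) := by rw [hq1]; ring
        _ = (1-z) - q^(n-i) := by rw [hq2]; ring
        _ = (1-z) * (1 - z * q^(n-i)) := by
            have : (1-z) * (z * q^(n-i)) = q^(n-i) := by
              rw [← mul_assoc, mul_comm (1-z) z, hze, one_mul]
            rw [mul_sub, mul_one, this]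
    simp only [Finset.prod_mul_distrib, Finset.prod_const, Finset.card_range] at key
    rw [hpowprod] at key
    rw [key]
    congr 1
    rw [← Finset.prod_range_reflect (fun i => 1 - z * q^(i+1)) n]
    apply Finset.prod_congr rfl
    intro i hi
    have hin2 : i < n := Finset.mem_range.mp hi
    rw [show n - 1 - i + 1 = n - i by omega]
  rw [hsplit x1, hsplit x2, htail1, htail2]
  -- assemble: Ca * (head1 * tail1) + Cb * (head2 * tail2)
  have hassemble1 : Ca * ((∏ i ∈ range n, (1 + x1 * q^i)) * ∏ i ∈ range n, (1 - z * q^i))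
      = (1+z)/3 * ((1-z)^n * z^n) * (∏ i ∈ range n, (1 - (1-z) * q^(i+1)))
        * ∏ i ∈ range n, (1 - z * q^i) := by
    rw [hCa]
    calc (1+z)/3 * (1-z)^n * (-1)^n * q^(tri (n+1))
          * ((∏ i ∈ range n, (1 + x1 * q^i)) * ∏ i ∈ range n, (1 - z * q^i))
        = (1+z)/3 * (1-z)^n * ((-1:ℂ)^n * q^(tri (n+1)) * ∏ i ∈ range n, (1 + x1 * q^i))
          * ∏ i ∈ range n, (1 - z * q^i) := by ring
      _ = _ := by rw [hhead1]; ring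
  have hassemble2 : Cb * ((∏ i ∈ range n, (1 + x2 * q^i)) * ∏ i ∈ range n, (1 - (1-z) * q^i))
      = (2-z)/3 * (z^n * (1-z)^n) * (∏ i ∈ range n, (1 - z * q^(i+1)))
        * ∏ i ∈ range n, (1 - (1-z) * q^i) := by
    rw [hCb]
    calc (2-z)/3 * z^n * (-1)^n * q^(tri (n+1))
          * ((∏ i ∈ range n, (1 + x2 * q^i)) * ∏ i ∈ range n, (1 - (1-z) * q^i))
        = (2-z)/3 * z^n * ((-1:ℂ)^n * q^(tri (n+1)) * ∏ i ∈ range n, (1 + x2 * q^i))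
          * ∏ i ∈ range n, (1 - (1-z) * q^i) := by ring
      _ = _ := by rw [hhead2]; ring
  rw [hassemble1, hassemble2]
  have hzn : (1-z)^n * z^n = 1 := by rw [← mul_pow]; rw [mul_comm]; rw [hze, one_pow]
  rw [hzn, show z^n * (1-z)^n = 1 by rw [← mul_pow, hze, one_pow]]
  -- shift products
  have hshift1 : ∏ i ∈ range n, (1 - (1-z) * q^(i+1))
      = (1-z) * (∏ i ∈ range n, (1 - (1-z) * q^i)) * (1 - (1-z) * q^n) := by
    have h1 : (∏ i ∈ range n, (1 - (1-z) * q^(i+1))) * (1 - (1-z) * q^0)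
        = (∏ i ∈ range n, (1 - (1-z) * q^i)) * (1 - (1-z) * q^n) := by
      rw [← Finset.prod_range_succ' (fun i => 1 - (1-z) * q^i) n,
        Finset.prod_range_succ]
    have h0 : (1 : ℂ) - (1-z) * q^0 = z := by rw [pow_zero]; ring
    rw [h0] at h1
    calc ∏ i ∈ range n, (1 - (1-z) * q^(i+1))
        = (1-z) * ((∏ i ∈ range n, (1 - (1-z) * q^(i+1))) * z) := by
          rw [show (1-z) * ((∏ i ∈ range n, (1 - (1-z) * q^(i+1))) * z)
            = (z*(1-z)) * ∏ i ∈ range n, (1 - (1-z) * q^(i+1)) by ring, hze, one_mul]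
      _ = _ := by rw [h1]; ring
  have hshift2 : ∏ i ∈ range n, (1 - z * q^(i+1))
      = z * (∏ i ∈ range n, (1 - z * q^i)) * (1 - z * q^n) := by
    have h1 : (∏ i ∈ range n, (1 - z * q^(i+1))) * (1 - z * q^0)
        = (∏ i ∈ range n, (1 - z * q^i)) * (1 - z * q^n) := by
      rw [← Finset.prod_range_succ' (fun i => 1 - z * q^i) n,
        Finset.prod_range_succ]
    have h0 : (1 : ℂ) - z * q^0 = 1 - z := by rw [pow_zero]; ring
    rw [h0] at h1
    calc ∏ i ∈ range n, (1 - z * q^(i+1))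
        = z * ((∏ i ∈ range n, (1 - z * q^(i+1))) * (1-z)) := by
          rw [show z * ((∏ i ∈ range n, (1 - z * q^(i+1))) * (1-z))
            = (z*(1-z)) * ∏ i ∈ range n, (1 - z * q^(i+1)) by ring, hze, one_mul]
      _ = _ := by rw [h1]; ring
  rw [hshift1, hshift2]
  have hprod : (∏ i ∈ range n, (1 - z * q^i)) * ∏ i ∈ range n, (1 - (1-z) * q^i)
      = ∏ i ∈ range n, (1 - q^i + q^(2*i)) := by
    rw [← Finset.prod_mul_distrib]
    apply Finset.prod_congr rfl
    intro i _
    have : q^(2*i) = q^i * q^i := by rw [two_mul, pow_add]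
    rw [this]
    linear_combination (-(q^i * q^i)) * hz
  calc (1+z)/3 * 1 * ((1-z) * (∏ i ∈ range n, (1 - (1-z) * q^i)) * (1 - (1-z)*q^n))
        * ∏ i ∈ range n, (1 - z * q^i)
      + (2-z)/3 * 1 * (z * (∏ i ∈ range n, (1 - z * q^i)) * (1 - z*q^n))
        * ∏ i ∈ range n, (1 - (1-z) * q^i)
      = ((1+z)/3 * (1-z) * (1 - (1-z)*q^n) + (2-z)/3 * z * (1 - z*q^n))
        * ((∏ i ∈ range n, (1 - z * q^i)) * ∏ i ∈ range n, (1 - (1-z) * q^i)) := by ring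
    _ = _ := by
        rw [hprod]
        have hbracket : (1+z)/3 * (1-z) * (1 - (1-z)*q^n) + (2-z)/3 * z * (1 - z*q^n)
            = 1 := by linear_combination ((-2 - q^n)/3) * hz
        rw [hbracket, one_mul]


end main
end BP15

open BP15 Finset in
theorem stmt15 (q : ℂ) (hq : ‖q‖ < 1) (n : ℕ) :
    qPoch (-1) (q ^ 3) n / (qPoch q q (2 * n) * qPoch (-1) q n) =
    ∑ r ∈ Finset.range (n + 1), alphaBP q r / (qPoch q q (n + r) * qPoch q q (n - r)) := by
  by_cases hq0 : q = 0
  · subst hq0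
    have hpoch0 : ∀ (a : ℂ) (m : ℕ), qPoch a 0 m = if m = 0 then 1 else 1 - a := by
      intro a m
      cases m with
      | zero => simp [qPoch]
      | succ m =>
          rw [if_neg (by omega)]
          unfold qPoch
          rw [Finset.prod_range_succ' (fun j => 1 - a * (0:ℂ)^j) m]
          have h1 : ∀ i ∈ range m, (1 : ℂ) - a * (0:ℂ)^(i+1) = 1 := by
            intro i _
            rw [zero_pow (by omega), mul_zero, sub_zero]
          rw [Finset.prod_congr rfl h1, Finset.prod_const_one, one_mul, pow_zero, mul_one]
    have hq00 : ∀ m : ℕ, qPoch 0 0 m = 1 := by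
      intro m
      rw [hpoch0]
      split <;> norm_num
    have hcube : (0 : ℂ)^3 = 0 := by norm_num
    rw [hcube, hq00 (2*n)]
    have hα0 : ∀ r : ℕ, 1 ≤ r → alphaBP 0 r = 0 := by
      intro r hr
      unfold alphaBP
      rw [if_neg (by omega)]
      by_cases h3 : r % 3 = 0
      · rw [if_pos h3]
        have hs1 : 1 ≤ r/3 := by omega
        have hss : r/3 ≤ (r/3) * (r/3) := Nat.le_mul_of_pos_left _ (by omega)
        have hsq : (r/3)^2 = (r/3)*(r/3) := by ring
        rw [zero_pow (by omega : (9 * (r / 3) ^ 2 - 3 * (r / 3)) / 2 ≠ 0)]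
        ring
      · rw [if_neg h3]
        by_cases h32 : r % 3 = 2
        · rw [if_pos h32, zero_pow (by omega), neg_zero]
        · rw [if_neg h32, zero_pow (by omega), neg_zero]
    have hRHS : ∑ r ∈ Finset.range (n + 1), alphaBP 0 r / (qPoch 0 0 (n + r) * qPoch 0 0 (n - r)) = 1 := by
      rw [Finset.sum_eq_single_of_mem 0 (Finset.mem_range.mpr (by omega))]
      · rw [hq00, hq00]
        unfold alphaBP
        rw [if_pos rfl]
        norm_num
      · intro b _ hb
        rw [hα0 b (by omega)]
        simp
    rw [hRHS, one_mul]
    rw [div_self]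
    rw [hpoch0]
    split
    · norm_num
    · norm_num
  · obtain ⟨z, hz⟩ := exists_z
    have key : ∑ r ∈ range (n+1), alphaBP q r * gB q (2*n) (n-r)
        = ∏ i ∈ range n, (1 - q^i + q^(2*i)) :=
      (sum_alpha_eq_sum_W q z n hz hq hq0).trans (sum_W_eq_prod q z n hz hq0)
    have hP2n := qPoch_q_ne_zero q hq (2*n)
    have hterm : ∀ r ∈ Finset.range (n+1),
        alphaBP q r / (qPoch q q (n + r) * qPoch q q (n - r))
          = alphaBP q r * gB q (2*n) (n-r) / qPoch q q (2*n) := by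
      intro r hr
      have hrn : r ≤ n := by
        have := Finset.mem_range.mp hr
        omega
      have hp := pochB q (2*n) (n-r) (n+r) (by omega)
      rw [div_eq_div_iff
        (mul_ne_zero (qPoch_q_ne_zero q hq _) (qPoch_q_ne_zero q hq _)) hP2n, hp]
      ring
    rw [Finset.sum_congr rfl hterm, ← Finset.sum_div, key]
    have hLHS : qPoch (-1) (q^3) n = qPoch (-1) q n * ∏ i ∈ range n, (1 - q^i + q^(2*i)) := by
      unfold qPoch
      rw [← Finset.prod_mul_distrib]
      apply Finset.prod_congr rfl
      intro j _
      have h3 : (q^3)^j = (q^j)^3 := by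
        rw [← pow_mul, ← pow_mul, Nat.mul_comm]
      have h2 : q^(2*j) = (q^j)^2 := by rw [← pow_mul, Nat.mul_comm]
      rw [h3, h2]
      ring
    rw [hLHS, mul_comm (qPoch (-1) q n)]
    rw [mul_div_mul_right _ _ (qPoch_neg_ne_zero q hq n)]
end

section
/- For |q|<1 and every nonnegative integer n, Σ_{r∈ℤ} (1-q^{6r+1}) q^{(9r^2-3r)/2} / ((q;q)_{n-3r} (q;q)_{n+3r+1}) = (-1;q^3)_n / ((q;q)_{2n} (-1;q)_n), where terms with n-3r < 0 vanish (interpreting 1/(q;q)_m = 0 for m < 0), and the right side is 1 when n = 0. -/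
open Complex

noncomputable def invPoch (q : ℂ) (m : ℤ) : ℂ := if m < 0 then 0 else (qPoch q q m.toNat)⁻¹

namespace Stmt16

lemma qPoch_zero (a q : ℂ) : qPoch a q 0 = 1 := Finset.prod_range_zero _

lemma qPoch_succ (a q : ℂ) (m : ℕ) : qPoch a q (m+1) = qPoch a q m * (1 - a * q ^ m) :=
  Finset.prod_range_succ _ _

lemma qPoch_one {q : ℂ} : qPoch q q 1 = 1 - q * q ^ 0 := by
  rw [qPoch, Finset.prod_range_one]

lemma qPoch_two {q : ℂ} : qPoch q q 2 = (1 - q * q ^ 0) * (1 - q * q ^ 1) := by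
  rw [show (2:ℕ) = 1+1 by norm_num, qPoch_succ, qPoch_one]

lemma qPoch_three {q : ℂ} : qPoch q q 3 = (1 - q * q ^ 0) * (1 - q * q ^ 1) * (1 - q * q ^ 2) := by
  rw [show (3:ℕ) = 2+1 by norm_num, qPoch_succ, qPoch_two]

lemma exp_shift (r : ℤ) : (9*(r+1)^2 - 3*(r+1))/2 = (9*r^2 - 3*r)/2 + (9*r + 3) := by
  obtain ⟨k, hk⟩ := Int.even_mul_succ_self (3*r - 1)
  have h9 : 9*r^2 - 3*r = k + k := by linear_combination hk
  have e : 9*(r+1)^2 - 3*(r+1) = (9*r^2 - 3*r) + (18*r + 6) := by ring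
  rw [e, h9]
  omega

section basic
variable {q : ℂ} (hq : ‖q‖ < 1) (hq0 : q ≠ 0)

include hq in
lemma pow_ne_one' {k : ℕ} (hk : k ≠ 0) : q ^ k ≠ 1 := by
  intro h
  have : ‖q ^ k‖ < 1 := by
    rw [norm_pow]
    exact pow_lt_one₀ (norm_nonneg q) hq hk
  rw [h] at this; simp at this

include hq in
lemma one_sub_pow_ne {k : ℕ} (hk : k ≠ 0) : (1 : ℂ) - q ^ k ≠ 0 :=
  sub_ne_zero.2 (Ne.symm (pow_ne_one' hq hk))

include hq in
lemma one_sub_q_mul_pow_ne (k : ℕ) : (1 : ℂ) - q * q ^ k ≠ 0 := by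
  have h := one_sub_pow_ne hq (Nat.succ_ne_zero k)
  rw [pow_succ] at h
  simpa [mul_comm] using h

include hq in
lemma one_add_pow_ne (k : ℕ) : (1 : ℂ) + q ^ k ≠ 0 := by
  rcases Nat.eq_zero_or_pos k with h | h
  · subst h; norm_num
  · intro he
    have h1 : q ^ k = -1 := by linear_combination he
    have : ‖q ^ k‖ < 1 := by
      rw [norm_pow]; exact pow_lt_one₀ (norm_nonneg q) hq (by omega)
    rw [h1] at this; simp at this

include hq in
lemma qPoch_q_ne (m : ℕ) : qPoch q q m ≠ 0 := by
  refine Finset.prod_ne_zero_iff.2 fun j _ => ?_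
  have h : (1:ℂ) - q * q ^ j ≠ 0 := one_sub_q_mul_pow_ne hq j
  exact h

include hq in
lemma qPoch_neg_one_ne (m : ℕ) : qPoch (-1) q m ≠ 0 := by
  refine Finset.prod_ne_zero_iff.2 fun j _ => ?_
  have h : (1 : ℂ) - (-1) * q ^ j = 1 + q ^ j := by ring
  rw [h]
  exact one_add_pow_ne hq j

lemma invPoch_coe (q : ℂ) (k : ℕ) : invPoch q (k : ℤ) = (qPoch q q k)⁻¹ := by
  simp [invPoch]

lemma invPoch_neg (q : ℂ) {m : ℤ} (h : m < 0) : invPoch q m = 0 := if_pos h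

end basic

section main
variable {q : ℂ} (hq : ‖q‖ < 1) (hq0 : q ≠ 0)

noncomputable def fS (q : ℂ) (n : ℕ) (r : ℤ) : ℂ :=
  (1 - q ^ (6 * r + 1)) * q ^ ((9 * r ^ 2 - 3 * r) / 2) *
    invPoch q ((n : ℤ) - 3 * r) * invPoch q ((n : ℤ) + 3 * r + 1)

noncomputable def gC (q : ℂ) (n : ℕ) (r : ℤ) : ℂ :=
  q ^ ((9 * r ^ 2 - 3 * r) / 2) * (q ^ (3 * r) + q) * (q ^ ((n:ℤ) + 3 * r) - 1) *
    (q ^ ((n:ℤ) + 3 * r + 1) - 1) * (q ^ ((n:ℤ) + 3 * r + 2) - 1) * q ^ ((n:ℤ) - 3 * r) /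
    (1 + q ^ n) * invPoch q ((n:ℤ) + 1 - 3 * r) * invPoch q ((n:ℤ) + 3 * r + 2)

include hq hq0 in
set_option maxHeartbeats 8000000 in
lemma cert (n : ℕ) (r : ℤ) :
    fS q (n+1) r * ((1 - q ^ (2*n+1)) * (1 - q ^ (2*n+2))) - fS q n r * (1 - q ^ n + q ^ (2*n)) =
    gC q n (r+1) - gC q n r := by
  rw [fS, fS, gC, gC]
  push_cast
  rcases le_or_gt ((n:ℤ) - 3*r) (-2) with h1 | h1
  · -- m1 ≤ -2 : everything zero
    rw [invPoch_neg q (show (n:ℤ) - 3*r < 0 by omega),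
      invPoch_neg q (show (n:ℤ) + 1 - 3*r < 0 by omega),
      invPoch_neg q (show (n:ℤ) + 1 - 3*(r+1) < 0 by omega)]
    ring
  rcases le_or_gt ((n:ℤ) + 3*r + 1) (-5) with h2 | h2
  · -- m2 ≤ -5 : everything zero
    rw [invPoch_neg q (show (n:ℤ) + 3*r + 1 < 0 by omega),
      invPoch_neg q (show (n:ℤ) + 1 + 3*r + 1 < 0 by omega),
      invPoch_neg q (show (n:ℤ) + 3*(r+1) + 2 < 0 by omega),
      invPoch_neg q (show (n:ℤ) + 3*r + 2 < 0 by omega)]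
    ring
  rcases (show ((n:ℤ) + 3*r + 1 = -4 ∨ (n:ℤ) + 3*r + 1 = -3 ∨ (n:ℤ) + 3*r + 1 = -2) ∨
      -1 ≤ (n:ℤ) + 3*r + 1 by omega) with (h3 | h3 | h3) | h3
  · -- m2 = -4
    rw [invPoch_neg q (show (n:ℤ) + 3*r + 1 < 0 by omega),
      invPoch_neg q (show (n:ℤ) + 1 + 3*r + 1 < 0 by omega),
      invPoch_neg q (show (n:ℤ) + 3*r + 2 < 0 by omega),
      show (n:ℤ) + 3*(r+1) + 2 = 0 by omega]
    simp
  · -- m2 = -3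
    rw [invPoch_neg q (show (n:ℤ) + 3*r + 1 < 0 by omega),
      invPoch_neg q (show (n:ℤ) + 1 + 3*r + 1 < 0 by omega),
      invPoch_neg q (show (n:ℤ) + 3*r + 2 < 0 by omega),
      show (n:ℤ) + 3*(r+1) + 1 = 0 by omega]
    simp
  · -- m2 = -2
    rw [invPoch_neg q (show (n:ℤ) + 3*r + 1 < 0 by omega),
      invPoch_neg q (show (n:ℤ) + 1 + 3*r + 1 < 0 by omega),
      invPoch_neg q (show (n:ℤ) + 3*r + 2 < 0 by omega),
      show (n:ℤ) + 3*(r+1) = 0 by omega]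
    simp
  rcases (show ((n:ℤ) - 3*r = -1) ∨ ((n:ℤ) - 3*r = 0) ∨ ((n:ℤ) - 3*r = 1) ∨
      ((n:ℤ) + 3*r + 1 = -1) ∨ (2 ≤ (n:ℤ) - 3*r ∧ 0 ≤ (n:ℤ) + 3*r + 1) by omega)
    with hm | hm | hm | hm | ⟨hm1, hm2⟩
  · -- m1 = -1
    rw [invPoch_neg q (show (n:ℤ) - 3*r < 0 by omega),
      invPoch_neg q (show (n:ℤ) + 1 - 3*(r+1) < 0 by omega)]
    simp only [mul_zero, zero_mul, zero_sub, sub_zero]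
    set E := q ^ ((9*r^2 - 3*r)/2) with hE
    rw [show (n:ℤ) + 1 - 3*r = ((0:ℕ):ℤ) by omega, invPoch_coe, qPoch_zero,
      show (n:ℤ) + 1 + 3*r + 1 = ((2*n+3:ℕ):ℤ) by push_cast; omega, invPoch_coe,
      show (n:ℤ) + 3*r + 2 = ((2*n+3:ℕ):ℤ) by push_cast; omega, invPoch_coe,
      show (n:ℤ) + 3*r + 1 = ((2*n+2:ℕ):ℤ) by push_cast; omega,
      show (n:ℤ) + 3*r = ((2*n+1:ℕ):ℤ) by push_cast; omega,
      show (n:ℤ) - 3*r = -1 from hm,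
      show (6*r+1 : ℤ) = ((2*n+3:ℕ):ℤ) by push_cast; omega,
      show (3*r : ℤ) = ((n+1:ℕ):ℤ) by push_cast; omega]
    simp only [zpow_natCast, zpow_neg_one]
    have hP := qPoch_q_ne hq (2*n+3)
    have h1 := one_add_pow_ne hq n
    field_simp
    ring
  · -- m1 = 0
    rw [invPoch_neg q (show (n:ℤ) + 1 - 3*(r+1) < 0 by omega)]
    simp only [mul_zero, zero_mul, zero_sub, sub_zero]
    set E := q ^ ((9*r^2 - 3*r)/2) with hE
    rw [show (n:ℤ) + 1 - 3*r = ((1:ℕ):ℤ) by omega, invPoch_coe,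
      show (n:ℤ) + 1 + 3*r + 1 = ((2*n+2:ℕ):ℤ) by push_cast; omega, invPoch_coe,
      show (n:ℤ) + 3*r + 2 = ((2*n+2:ℕ):ℤ) by push_cast; omega, invPoch_coe,
      show (n:ℤ) + 3*r + 1 = ((2*n+1:ℕ):ℤ) by push_cast; omega, invPoch_coe,
      show (n:ℤ) + 3*r = ((2*n:ℕ):ℤ) by push_cast; omega,
      show (n:ℤ) - 3*r = ((0:ℕ):ℤ) by omega, invPoch_coe, qPoch_zero,
      show (6*r+1 : ℤ) = ((2*n+1:ℕ):ℤ) by push_cast; omega,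
      show (3*r : ℤ) = ((n:ℕ):ℤ) by omega]
    simp only [zpow_natCast]
    have hP1 := qPoch_q_ne hq (2*n+1)
    have hP2 := qPoch_q_ne hq (2*n+2)
    have hP3 := qPoch_q_ne hq 1
    have h1 := one_add_pow_ne hq n
    have h2 := one_sub_q_mul_pow_ne hq (2*n+1)
    have h3 := one_sub_q_mul_pow_ne hq 0
    have e1 : qPoch q q (2*n+2) = qPoch q q (2*n+1) * (1 - q * q ^ (2*n+1)) :=
      qPoch_succ q q (2*n+1)
    field_simp
    rw [e1, qPoch_one]
    ring
  · -- m1 = 1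
    obtain ⟨m, rfl⟩ : ∃ m, n = m + 1 := ⟨n - 1, by omega⟩
    rw [invPoch_neg q (show ((m+1:ℕ):ℤ) + 1 - 3*(r+1) < 0 by push_cast; omega)]
    simp only [mul_zero, zero_mul, zero_sub, sub_zero]
    set E := q ^ ((9*r^2 - 3*r)/2) with hE
    rw [show ((m+1:ℕ):ℤ) + 1 - 3*r = ((2:ℕ):ℤ) by push_cast; omega, invPoch_coe,
      show ((m+1:ℕ):ℤ) + 1 + 3*r + 1 = ((2*m+3:ℕ):ℤ) by push_cast; omega, invPoch_coe,
      show ((m+1:ℕ):ℤ) + 3*r + 2 = ((2*m+3:ℕ):ℤ) by push_cast; omega, invPoch_coe,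
      show ((m+1:ℕ):ℤ) + 3*r + 1 = ((2*m+2:ℕ):ℤ) by push_cast; omega, invPoch_coe,
      show ((m+1:ℕ):ℤ) + 3*r = ((2*m+1:ℕ):ℤ) by push_cast; omega,
      show ((m+1:ℕ):ℤ) - 3*r = ((1:ℕ):ℤ) by push_cast; omega, invPoch_coe,
      show (6*r+1 : ℤ) = ((2*m+1:ℕ):ℤ) by push_cast; omega,
      show (3*r : ℤ) = ((m:ℕ):ℤ) by push_cast; omega]
    simp only [zpow_natCast]
    have hP1 := qPoch_q_ne hq (2*m+2)
    have hP2 := qPoch_q_ne hq (2*m+3)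
    have hP3 := qPoch_q_ne hq 1
    have hP4 := qPoch_q_ne hq 2
    have h1 := one_add_pow_ne hq (m+1)
    have h2 := one_sub_q_mul_pow_ne hq (2*m+2)
    have h3 := one_sub_q_mul_pow_ne hq 0
    have h4 := one_sub_q_mul_pow_ne hq 1
    have e1 : qPoch q q (2*m+3) = qPoch q q (2*m+2) * (1 - q * q ^ (2*m+2)) :=
      qPoch_succ q q (2*m+2)
    field_simp
    rw [e1, qPoch_two, qPoch_one]
    ring
  · -- m2 = -1
    obtain ⟨m, rfl⟩ : ∃ m, n = m + 1 := ⟨n - 1, by omega⟩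
    rw [invPoch_neg q (show ((m+1:ℕ):ℤ) + 3*r + 1 < 0 by push_cast; omega)]
    rw [show ((m+1:ℕ):ℤ) + 3*r + 2 = 0 by push_cast; omega]
    simp only [zpow_zero, sub_self, mul_zero, zero_mul, sub_zero, zero_div]
    rw [exp_shift r,
      show (q:ℂ) ^ ((9*r^2-3*r)/2 + (9*r+3)) = q ^ ((9*r^2-3*r)/2) * q ^ (9*r+3) from
        zpow_add₀ hq0 _ _]
    set E := q ^ ((9*r^2 - 3*r)/2) with hE
    rw [show ((m+1:ℕ):ℤ) + 1 - 3*r = ((2*m+5:ℕ):ℤ) by push_cast; omega, invPoch_coe,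
      show ((m+1:ℕ):ℤ) + 1 + 3*r + 1 = ((0:ℕ):ℤ) by push_cast; omega, invPoch_coe, qPoch_zero,
      show ((m+1:ℕ):ℤ) + 1 - 3*(r+1) = ((2*m+2:ℕ):ℤ) by push_cast; omega, invPoch_coe,
      show ((m+1:ℕ):ℤ) + 3*(r+1) + 2 = ((3:ℕ):ℤ) by push_cast; omega, invPoch_coe,
      show ((m+1:ℕ):ℤ) + 3*(r+1) + 1 = ((2:ℕ):ℤ) by push_cast; omega,
      show ((m+1:ℕ):ℤ) + 3*(r+1) = ((1:ℕ):ℤ) by push_cast; omega,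
      show ((m+1:ℕ):ℤ) - 3*(r+1) = ((2*m+1:ℕ):ℤ) by push_cast; omega,
      show (9*r+3 : ℤ) = -((3*m+6:ℕ):ℤ) by push_cast; omega,
      show (6*r+1 : ℤ) = -((2*m+5:ℕ):ℤ) by push_cast; omega,
      show (3*(r+1) : ℤ) = -((m:ℕ):ℤ) by push_cast; omega]
    simp only [zpow_neg, zpow_natCast, inv_one]
    have hP1 := qPoch_q_ne hq (2*m+2)
    have hP2 := qPoch_q_ne hq (2*m+4)
    have hP3 := qPoch_q_ne hq (2*m+5)
    have hP4 := qPoch_q_ne hq 3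
    have h1 := one_add_pow_ne hq (m+1)
    have hw1 : (q:ℂ)^m ≠ 0 := pow_ne_zero m hq0
    have hw2 : (q:ℂ)^(2*m+5) ≠ 0 := pow_ne_zero _ hq0
    have hw3 : (q:ℂ)^(3*m+6) ≠ 0 := pow_ne_zero _ hq0
    have e1 : qPoch q q (2*m+5) = qPoch q q (2*m+4) * (1 - q * q ^ (2*m+4)) :=
      qPoch_succ q q (2*m+4)
    have e2 : qPoch q q (2*m+4) = qPoch q q (2*m+2) * (1 - q * q ^ (2*m+2)) * (1 - q * q ^ (2*m+3)) := by
      rw [show 2*m+4 = 2*m+3+1 by omega, qPoch_succ, show 2*m+3 = 2*m+2+1 by omega, qPoch_succ]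
    field_simp [hP1, hP2, hP3, hP4, h1, hw1, hw2, hw3]
    rw [e1, e2, qPoch_three]
    ring
  · -- generic case
    obtain ⟨a, ha⟩ : ∃ a : ℕ, (n:ℤ) - 3*r = (a:ℤ) + 2 := ⟨((n:ℤ) - 3*r - 2).toNat, by omega⟩
    obtain ⟨b, hb⟩ : ∃ b : ℕ, (n:ℤ) + 3*r + 1 = (b:ℤ) := ⟨((n:ℤ) + 3*r + 1).toNat, by omega⟩
    rw [exp_shift r,
      show (q:ℂ) ^ ((9*r^2-3*r)/2 + (9*r+3)) = q ^ ((9*r^2-3*r)/2) * q ^ (9*r+3) from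
        zpow_add₀ hq0 _ _]
    set E := q ^ ((9*r^2 - 3*r)/2) with hE
    rw [show (n:ℤ) + 1 - 3*r = ((a+3:ℕ):ℤ) by push_cast; omega, invPoch_coe,
      show (n:ℤ) + 1 + 3*r + 1 = ((b+1:ℕ):ℤ) by push_cast; omega, invPoch_coe,
      show (n:ℤ) - 3*r = ((a+2:ℕ):ℤ) by push_cast; omega, invPoch_coe,
      show (n:ℤ) + 1 - 3*(r+1) = ((a:ℕ):ℤ) by push_cast; omega, invPoch_coe,
      show (n:ℤ) + 3*(r+1) + 2 = ((b+4:ℕ):ℤ) by push_cast; omega, invPoch_coe,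
      show (n:ℤ) + 3*r + 2 = ((b+1:ℕ):ℤ) by push_cast; omega, invPoch_coe,
      show (n:ℤ) + 3*r + 1 = ((b:ℕ):ℤ) by push_cast; omega, invPoch_coe,
      show (n:ℤ) + 3*(r+1) + 1 = ((b+3:ℕ):ℤ) by push_cast; omega,
      show (n:ℤ) + 3*(r+1) = ((b+2:ℕ):ℤ) by push_cast; omega,
      show (n:ℤ) + 3*r = ((b:ℕ):ℤ) + (-1) by push_cast; omega,
      show (n:ℤ) - 3*(r+1) = ((a:ℕ):ℤ) + (-1) by push_cast; omega,
      show (9*r+3 : ℤ) = 3*r + (3*r + (3*r + ((3:ℕ):ℤ))) by push_cast; ring,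
      show (6*r+1 : ℤ) = 3*r + (3*r + ((1:ℕ):ℤ)) by push_cast; ring,
      show (3*(r+1) : ℤ) = 3*r + ((3:ℕ):ℤ) by push_cast; ring]
    simp only [zpow_add₀ hq0, zpow_neg_one, zpow_natCast]
    generalize hX : (q:ℂ) ^ (3*r : ℤ) = X
    have hX0 : X ≠ 0 := hX ▸ zpow_ne_zero _ hq0
    have hB : (q:ℂ)^b = q^n * X * q := by
      rw [← hX, ← zpow_natCast q b, ← zpow_natCast q n,
        show ((b:ℕ):ℤ) = ((n:ℕ):ℤ) + 3*r + 1 by push_cast; omega,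
        zpow_add₀ hq0, zpow_add₀ hq0, zpow_natCast, zpow_one]
    have hT : (q:ℂ)^n = X * q^a * q * q := by
      rw [← hX, ← zpow_natCast q n,
        show ((n:ℕ):ℤ) = 3*r + ((a:ℕ):ℤ) + 1 + 1 by push_cast; omega,
        zpow_add₀ hq0, zpow_add₀ hq0, zpow_add₀ hq0, zpow_natCast, zpow_one]
    have hP1 := qPoch_q_ne hq a
    have hP2 := qPoch_q_ne hq b
    have hP3 := qPoch_q_ne hq (a+2)
    have hP4 := qPoch_q_ne hq (a+3)
    have hP5 := qPoch_q_ne hq (b+1)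
    have hP6 := qPoch_q_ne hq (b+4)
    have h1 := one_add_pow_ne hq n
    have ea1 : qPoch q q (a+3) = qPoch q q (a+2) * (1 - q * q^(a+2)) := by
      rw [show a+3 = a+2+1 by omega, qPoch_succ]
    have ea2 : qPoch q q (a+2) = qPoch q q a * (1 - q * q^a) * (1 - q * q^(a+1)) := by
      rw [show a+2 = a+1+1 by omega, qPoch_succ, qPoch_succ]
    have eb1 : qPoch q q (b+1) = qPoch q q b * (1 - q * q^b) := qPoch_succ q q b
    have eb2 : qPoch q q (b+4) = qPoch q q b * (1 - q * q^b) * (1 - q * q^(b+1)) *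
        (1 - q * q^(b+2)) * (1 - q * q^(b+3)) := by
      rw [show b+4 = b+3+1 by omega, qPoch_succ, show b+3 = b+2+1 by omega, qPoch_succ,
        show b+2 = b+1+1 by omega, qPoch_succ, qPoch_succ]
    field_simp [hP1, hP2, hP3, hP4, hP5, hP6, h1, hX0]
    rw [ea1, ea2, eb1, eb2]
    rw [show 2*n+2 = n+n+2 by omega, show 2*n+1 = n+n+1 by omega, show 2*n = n+n by omega]
    simp only [pow_add]
    rw [hB, hT]
    ring

include hq in
lemma fS_eq_zero (n : ℕ) {m r : ℤ} (hm : (n:ℤ) + 1 ≤ m) (h : r ∉ Finset.Icc (-m) m) :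
    fS q n r = 0 := by
  rw [Finset.mem_Icc, not_and_or, not_le, not_le] at h
  rcases h with h | h
  · rw [fS, invPoch_neg q (show (n:ℤ) + 3*r + 1 < 0 by omega)]
    ring
  · rw [fS, invPoch_neg q (show (n:ℤ) - 3*r < 0 by omega)]
    ring

include hq in
lemma tsum_fS (n : ℕ) (m : ℤ) (hm : (n:ℤ) + 1 ≤ m) :
    ∑' r : ℤ, fS q n r = ∑ r ∈ Finset.Icc (-m) m, fS q n r :=
  tsum_eq_sum (fun r hr => fS_eq_zero hq n hm hr)

lemma sum_telescope_Icc (f : ℤ → ℂ) (a : ℤ) :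
    ∀ b : ℤ, a - 1 ≤ b → ∑ r ∈ Finset.Icc a b, (f (r+1) - f r) = f (b+1) - f a := by
  refine Int.le_induction ?_ ?_
  · rw [Finset.Icc_eq_empty (by omega), Finset.sum_empty,
      show a - 1 + 1 = a by ring, sub_self]
  · intro b hb ih
    have hins : Finset.Icc a (b+1) = insert (b+1) (Finset.Icc a b) := by
      ext x
      simp only [Finset.mem_Icc, Finset.mem_insert]
      omega
    rw [hins, Finset.sum_insert (by simp only [Finset.mem_Icc]; omega), ih]
    ring

include hq hq0 in
lemma main_ind (n : ℕ) :
    ∑' r : ℤ, fS q n r = qPoch (-1) (q ^ 3) n / (qPoch q q (2 * n) * qPoch (-1) q n) := by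
  induction n with
  | zero =>
    rw [tsum_fS hq 0 1 (by norm_num)]
    rw [show Finset.Icc (-1:ℤ) 1 = {-1, 0, 1} from by decide]
    rw [Finset.sum_insert (by decide), Finset.sum_insert (by decide), Finset.sum_singleton]
    have t1 : fS q 0 (-1) = 0 := by
      rw [fS, invPoch_neg q (show ((0:ℕ):ℤ) + 3*(-1) + 1 < 0 by norm_num)]
      ring
    have t3 : fS q 0 1 = 0 := by
      rw [fS, invPoch_neg q (show ((0:ℕ):ℤ) - 3*1 < 0 by norm_num)]
      ring
    have t2 : fS q 0 0 = 1 := by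
      rw [fS, show ((0:ℕ):ℤ) - 3*0 = ((0:ℕ):ℤ) by norm_num, invPoch_coe, qPoch_zero,
        show ((0:ℕ):ℤ) + 3*0 + 1 = ((1:ℕ):ℤ) by norm_num, invPoch_coe, qPoch_one,
        show (6*(0:ℤ)+1) = ((1:ℕ):ℤ) by norm_num, zpow_natCast,
        show ((9*(0:ℤ)^2 - 3*0)/2) = ((0:ℕ):ℤ) by norm_num, zpow_natCast]
      have h : (1:ℂ) - q ≠ 0 := by simpa using one_sub_q_mul_pow_ne hq 0
      field_simp
    rw [t1, t2, t3, show (2*0 : ℕ) = 0 by norm_num, qPoch_zero, qPoch_zero, qPoch_zero]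
    norm_num
  | succ n ih =>
    have hD : ((1:ℂ) - q^(2*n+1)) * (1 - q^(2*n+2)) ≠ 0 :=
      mul_ne_zero (one_sub_pow_ne hq (by omega)) (one_sub_pow_ne hq (by omega))
    have hTel : ∑ r ∈ Finset.Icc (-((n:ℤ)+2)) ((n:ℤ)+2),
        (fS q (n+1) r * ((1 - q ^ (2*n+1)) * (1 - q ^ (2*n+2))) -
          fS q n r * (1 - q ^ n + q ^ (2*n))) = 0 := by
      rw [Finset.sum_congr rfl (fun r _ => cert hq hq0 n r)]
      rw [sum_telescope_Icc (gC q n) (-((n:ℤ)+2)) ((n:ℤ)+2) (by omega)]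
      have z1 : gC q n ((n:ℤ)+2+1) = 0 := by
        rw [gC, invPoch_neg q (show (n:ℤ)+1-3*((n:ℤ)+2+1) < 0 by omega)]
        ring
      have z2 : gC q n (-((n:ℤ)+2)) = 0 := by
        rw [gC, invPoch_neg q (show (n:ℤ)+3*(-((n:ℤ)+2))+2 < 0 by omega)]
        ring
      rw [z1, z2, sub_self]
    rw [Finset.sum_sub_distrib, sub_eq_zero, ← Finset.sum_mul, ← Finset.sum_mul,
      ← tsum_fS hq (n+1) ((n:ℤ)+2) (by push_cast; omega),
      ← tsum_fS hq n ((n:ℤ)+2) (by omega)] at hTel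
    have hP1 := qPoch_q_ne hq (2*n)
    have hP2 := qPoch_neg_one_ne hq n
    have hq3 : ‖q^3‖ < 1 := by
      rw [norm_pow]
      exact pow_lt_one₀ (norm_nonneg q) hq (by omega)
    have hP3 : (1:ℂ) - (-1) * (q^3)^n ≠ 0 := by
      have h := one_add_pow_ne hq3 n
      intro he; apply h; linear_combination he
    have hP4 : (1:ℂ) - (-1) * q^n ≠ 0 := by
      have h := one_add_pow_ne hq n
      intro he; apply h; linear_combination he
    have h5 := one_sub_q_mul_pow_ne hq (2*n)
    have h6 := one_sub_q_mul_pow_ne hq (2*n+1)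
    have hR : qPoch (-1) (q^3) (n+1) / (qPoch q q (2*(n+1)) * qPoch (-1) q (n+1)) *
        ((1 - q^(2*n+1)) * (1 - q^(2*n+2))) =
        qPoch (-1) (q^3) n / (qPoch q q (2*n) * qPoch (-1) q n) * (1 - q^n + q^(2*n)) := by
      rw [show 2*(n+1) = 2*n+1+1 by omega, qPoch_succ q q (2*n+1), qPoch_succ q q (2*n),
        qPoch_succ (-1) q n, qPoch_succ (-1) (q^3) n, div_mul_eq_mul_div, div_mul_eq_mul_div,
        div_eq_div_iff
          (mul_ne_zero (mul_ne_zero (mul_ne_zero hP1 h5) h6) (mul_ne_zero hP2 hP4))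
          (mul_ne_zero hP1 hP2)]
      ring
    refine mul_right_cancel₀ hD ?_
    rw [hTel, ih]
    exact hR.symm

end main

end Stmt16

theorem stmt16 (q : ℂ) (hq : ‖q‖ < 1) (hq0 : q ≠ 0) (n : ℕ) :
    ∑' r : ℤ, (1 - q ^ (6 * r + 1)) * q ^ ((9 * r ^ 2 - 3 * r) / 2) *
      invPoch q ((n : ℤ) - 3 * r) * invPoch q ((n : ℤ) + 3 * r + 1) =
    qPoch (-1) (q ^ 3) n / (qPoch q q (2 * n) * qPoch (-1) q n) := by
  exact Stmt16.main_ind hq hq0 n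
end
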